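/- If r ≥ 2 and (a_j : 0 ≤ j ≤ 2^s) is a sequence of complex numbers, then V_r(a_j : 0 ≤ j ≤ 2^s) ≤ √2 · ∑_{i=0}^{s} (∑_{j=0}^{2^{s-i}-1} |a_{(j+1)2^i} - a_{j 2^i}|^2)^{1/2}. -/

import Mathlib

open scoped ENNReal

/-- The `r`-variational seminorm of a sequence `a` indexed by a subset `A ⊆ ℕ`. -/
noncomputable def variationSeminorm (r : ℝ) (a : ℕ → ℂ) (A : Set ℕ) : ℝ≥0∞ :=
  ⨆ (J : ℕ) (k : Fin (J + 1) → ℕ) (_ : StrictMono k) (_ : ∀ j, k j ∈ A),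
    (∑ j : Fin J, ENNReal.ofReal (‖a (k j.succ) - a (k j.castSucc)‖ ^ r)) ^ (1 / r)

namespace VarAux

noncomputable def nsq (z : ℂ) : ℝ≥0∞ := ENNReal.ofReal ‖z‖ ^ (2:ℝ)

lemma nsq_zero : nsq 0 = 0 := by
  simp [nsq, ENNReal.zero_rpow_of_pos (by norm_num : (0:ℝ) < 2)]

lemma nsq_eq (z : ℂ) : ENNReal.ofReal (‖z‖ ^ 2) = nsq z := by
  rw [nsq, ENNReal.ofReal_pow (norm_nonneg z), ← ENNReal.rpow_natCast]
  norm_num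

lemma aux_sum_rpow_le_rpow_sum {ι : Type*} (s : Finset ι) (f : ι → ℝ≥0∞) {p : ℝ} (hp : 1 ≤ p) :
    ∑ i ∈ s, f i ^ p ≤ (∑ i ∈ s, f i) ^ p := by
  classical
  induction s using Finset.induction_on with
  | empty => simp [ENNReal.zero_rpow_of_pos (lt_of_lt_of_le zero_lt_one hp)]
  | insert _ _ h ih =>
      rw [Finset.sum_insert h, Finset.sum_insert h]
      exact le_trans (add_le_add le_rfl ih) (ENNReal.add_rpow_le_rpow_add _ _ hp)

lemma aux_sqrt2 (x y : ℝ≥0∞) :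
    x ^ ((1:ℝ)/2) + y ^ ((1:ℝ)/2) ≤ ENNReal.ofReal (Real.sqrt 2) * (x + y) ^ ((1:ℝ)/2) := by
  have h2 : ENNReal.ofReal (Real.sqrt 2) = (2:ℝ≥0∞) ^ ((1:ℝ)/2) := by
    rw [Real.sqrt_eq_rpow, ← ENNReal.ofReal_rpow_of_pos (by norm_num), ENNReal.ofReal_ofNat]
  set u := x ^ ((1:ℝ)/2)
  set v := y ^ ((1:ℝ)/2)
  have hu : u ^ (2:ℝ) = x := by
    rw [← ENNReal.rpow_mul]; norm_num
  have hv : v ^ (2:ℝ) = y := by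
    rw [← ENNReal.rpow_mul]; norm_num
  have key : (u + v) ^ (2:ℝ) ≤ 2 * (x + y) := by
    have h := ENNReal.rpow_add_le_mul_rpow_add_rpow u v (p := 2) one_le_two
    rw [hu, hv] at h
    calc (u + v) ^ (2:ℝ) ≤ (2:ℝ≥0∞) ^ (2-1:ℝ) * (x + y) := h
      _ = 2 * (x + y) := by norm_num [ENNReal.rpow_one]
  calc u + v = ((u + v) ^ (2:ℝ)) ^ ((1:ℝ)/2) := by rw [← ENNReal.rpow_mul]; norm_num
    _ ≤ (2 * (x + y)) ^ ((1:ℝ)/2) := ENNReal.rpow_le_rpow key (by norm_num)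
    _ = ENNReal.ofReal (Real.sqrt 2) * (x + y) ^ ((1:ℝ)/2) := by
        rw [ENNReal.mul_rpow_of_nonneg _ _ (by norm_num), h2]

lemma aux_pair_sum {M : Type*} [AddCommMonoid M] (G : ℕ → M) (J : ℕ) :
    ∑ t ∈ Finset.range (2*J), G t = ∑ j ∈ Finset.range J, (G (2*j) + G (2*j+1)) := by
  induction J with
  | zero => simp
  | succ n ih =>
      have h : 2*(n+1) = (2*n+1)+1 := by omega
      rw [h, Finset.sum_range_succ, Finset.sum_range_succ, ih, Finset.sum_range_succ]
      abel

lemma key_lemma : ∀ (s : ℕ) (a : ℕ → ℂ) (J : ℕ) (k : ℕ → ℕ),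
    (∀ j, k j ≤ k (j+1)) → (∀ j, k j ≤ 2 ^ s) →
    (∑ j ∈ Finset.range J, nsq (a (k (j+1)) - a (k j))) ^ ((1:ℝ)/2) ≤
      ENNReal.ofReal (Real.sqrt 2) *
        ∑ i ∈ Finset.range (s + 1),
          (∑ j ∈ Finset.range (2 ^ (s - i)), nsq (a ((j+1) * 2^i) - a (j * 2^i))) ^ ((1:ℝ)/2) := by
  intro s
  induction s with
  | zero =>
      intro a J k hstep hbd
      have hmono : Monotone k := monotone_nat_of_le_succ hstep
      have hone : (1:ℝ≥0∞) ≤ ENNReal.ofReal (Real.sqrt 2) := by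
        rw [ENNReal.one_le_ofReal]
        nlinarith [Real.sq_sqrt (by norm_num : (0:ℝ) ≤ 2), Real.sqrt_nonneg 2]
      simp only [Nat.zero_add, zero_add, Finset.sum_range_one, Nat.sub_self, pow_zero, pow_one,
        mul_one, one_mul]
      have hsum : ∑ j ∈ Finset.range J, nsq (a (k (j+1)) - a (k j)) ≤ nsq (a 1 - a 0) := by
        have hterm : ∀ j ∈ Finset.range J, nsq (a (k (j+1)) - a (k j)) =
            if k j = 0 ∧ k (j+1) = 1 then nsq (a 1 - a 0) else 0 := by
          intro j _
          by_cases h01 : k j = 0 ∧ k (j+1) = 1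
          · rw [if_pos h01, h01.1, h01.2]
          · rw [if_neg h01]
            have hb1 := hbd j; have hb2 := hbd (j+1); have hs := hstep j
            have : k (j+1) = k j := by
              simp only [pow_zero] at hb1 hb2; omega
            rw [this, sub_self, nsq_zero]
        rw [Finset.sum_congr rfl hterm, ← Finset.sum_filter, Finset.sum_const]
        have hcard : ((Finset.range J).filter (fun j => k j = 0 ∧ k (j+1) = 1)).card ≤ 1 := by
          refine Finset.card_le_one.mpr ?_
          intro x hx y hy
          simp only [Finset.mem_filter, Finset.mem_range] at hx hy
          rcases Nat.lt_trichotomy x y with h|h|h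
          · exfalso; have := hmono (show x+1 ≤ y by omega); omega
          · exact h
          · exfalso; have := hmono (show y+1 ≤ x by omega); omega
        calc ((Finset.range J).filter (fun j => k j = 0 ∧ k (j+1) = 1)).card • nsq (a 1 - a 0)
            ≤ 1 * nsq (a 1 - a 0) := by
              rw [nsmul_eq_mul]
              exact mul_le_mul_left (by exact_mod_cast hcard) _
          _ = nsq (a 1 - a 0) := one_mul _
      exact le_trans (ENNReal.rpow_le_rpow hsum (by norm_num))
        (le_mul_of_one_le_left zero_le hone)
  | succ s ih =>
      intro a J k hstep hbd
      classical
      have hmono : Monotone k := monotone_nat_of_le_succ hstep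
      have hpow : (2:ℕ) ^ (s+1) = 2 * 2 ^ s := by rw [pow_succ]; ring
      set b : ℕ → ℂ := fun t => a (2 * t) with hb
      set c : ℕ → ℕ := fun t =>
        if t % 2 = 0 then (k (t/2) + 1) / 2 else max (k (t/2 + 1) / 2) ((k (t/2) + 1) / 2) with hc
      have hceven : ∀ j, c (2*j) = (k j + 1) / 2 := by
        intro j
        have h1 : (2*j) % 2 = 0 := by omega
        have h2 : (2*j) / 2 = j := by omega
        simp [hc, h1, h2]
      have hcodd : ∀ j, c (2*j+1) = max (k (j+1) / 2) ((k j + 1) / 2) := by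
        intro j
        have h1 : (2*j+1) % 2 = 1 := by omega
        have h2 : (2*j+1) / 2 = j := by omega
        simp [hc, h1, h2]
      have hcstep : ∀ t, c t ≤ c (t+1) := by
        intro t
        rcases Nat.even_or_odd t with ⟨m, rfl⟩ | ⟨m, rfl⟩
        · have e : m + m = 2*m := by omega
          rw [e, hceven, hcodd]
          exact le_max_right _ _
        · rw [hcodd, show 2*m+1+1 = 2*(m+1) by omega, hceven]
          exact max_le (Nat.div_le_div_right (Nat.le_succ _))
            (Nat.div_le_div_right (by have := hstep m; omega))
      have hcbd : ∀ t, c t ≤ 2 ^ s := by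
        intro t
        have hb1 := hbd (t/2); have hb2 := hbd (t/2+1)
        rw [hpow] at hb1 hb2
        simp only [hc]
        split
        · omega
        · exact max_le (by omega) (by omega)
      have IH := ih b (2*J) c hcstep hcbd
      have hbdiff : ∀ i j : ℕ, b ((j+1) * 2^i) - b (j * 2^i) = a ((j+1) * 2^(i+1)) - a (j * 2^(i+1)) := by
        intro i j
        simp only [hb]
        rw [show 2*((j+1)*2^i) = (j+1)*2^(i+1) by rw [pow_succ]; ring,
          show 2*(j*2^i) = j*2^(i+1) by rw [pow_succ]; ring]
      set U : ℕ → ℝ≥0∞ := fun j =>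
        if k j < k (j+1) then ENNReal.ofReal ‖a (k (j+1)) - a (2 * (k (j+1) / 2))‖ else 0 with hU
      set V : ℕ → ℝ≥0∞ := fun j =>
        if k j < k (j+1) then ENNReal.ofReal ‖a (2 * (k (j+1) / 2)) - a (2 * ((k j + 1) / 2))‖ else 0 with hV
      set W : ℕ → ℝ≥0∞ := fun j =>
        if k j < k (j+1) then ENNReal.ofReal ‖a (2 * ((k j + 1) / 2)) - a (k j)‖ else 0 with hW
      have hpoint : ∀ j, ENNReal.ofReal ‖a (k (j+1)) - a (k j)‖ ≤ U j + V j + W j := by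
        intro j
        by_cases hlt : k j < k (j+1)
        · simp only [hU, hV, hW, if_pos hlt]
          rw [← ENNReal.ofReal_add (norm_nonneg _) (norm_nonneg _),
            ← ENNReal.ofReal_add (by positivity) (norm_nonneg _)]
          apply ENNReal.ofReal_le_ofReal
          have e : a (k (j+1)) - a (k j) =
              (a (k (j+1)) - a (2 * (k (j+1) / 2))) + (a (2 * (k (j+1) / 2)) - a (2 * ((k j + 1) / 2)))
                + (a (2 * ((k j + 1) / 2)) - a (k j)) := by ring
          rw [e]
          exact norm_add₃_le
        · have heq : k (j+1) = k j := by have := hstep j; omega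
          simp only [hU, hV, hW, if_neg hlt]
          rw [heq, sub_self]
          simp
      have hsq : ∀ j ∈ Finset.range J,
          nsq (a (k (j+1)) - a (k j)) ≤ (U j + V j + W j) ^ (2:ℝ) := fun j _ =>
        ENNReal.rpow_le_rpow (hpoint j) (by norm_num)
      have step1 : (∑ j ∈ Finset.range J, nsq (a (k (j+1)) - a (k j))) ^ ((1:ℝ)/2) ≤
          (∑ j ∈ Finset.range J, (U j + V j + W j) ^ (2:ℝ)) ^ ((1:ℝ)/2) :=
        ENNReal.rpow_le_rpow (Finset.sum_le_sum hsq) (by norm_num)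
      have step2 : (∑ j ∈ Finset.range J, (U j + V j + W j) ^ (2:ℝ)) ^ ((1:ℝ)/2) ≤
          ((∑ j ∈ Finset.range J, U j ^ (2:ℝ)) ^ ((1:ℝ)/2)
            + (∑ j ∈ Finset.range J, V j ^ (2:ℝ)) ^ ((1:ℝ)/2))
            + (∑ j ∈ Finset.range J, W j ^ (2:ℝ)) ^ ((1:ℝ)/2) := by
        have h1 := ENNReal.Lp_add_le (Finset.range J) (fun j => U j + V j) W one_le_two
        have h2 := ENNReal.Lp_add_le (Finset.range J) U V one_le_two
        exact le_trans h1 (add_le_add h2 le_rfl)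
      -- bound on the V part via the coarse chain
      have hVle : ∑ j ∈ Finset.range J, V j ^ (2:ℝ) ≤
          ∑ t ∈ Finset.range (2*J), nsq (b (c (t+1)) - b (c t)) := by
        rw [aux_pair_sum]
        refine Finset.sum_le_sum ?_
        intro j _
        refine le_trans ?_ le_self_add
        by_cases hlt : k j < k (j+1)
        · have e1 : c (2*j) = (k j + 1) / 2 := hceven j
          have e2 : c (2*j+1) = k (j+1) / 2 := by
            rw [hcodd]
            exact max_eq_left (Nat.div_le_div_right (by omega))
          simp only [hV, if_pos hlt, nsq, hb, e1, e2]
          exact le_rfl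
        · simp only [hV, if_neg hlt]
          rw [ENNReal.zero_rpow_of_pos (by norm_num : (0:ℝ) < 2)]
          exact zero_le
      set g : ℕ → ℝ≥0∞ := fun m => nsq (a (m+1) - a m) with hg
      have hUW : (∑ j ∈ Finset.range J, U j ^ (2:ℝ)) + ∑ j ∈ Finset.range J, W j ^ (2:ℝ) ≤
          ∑ m ∈ Finset.range (2^(s+1)), g m := by
        have hU2 : ∀ j ∈ Finset.range J, U j ^ (2:ℝ) =
            if k j < k (j+1) ∧ k (j+1) % 2 = 1 then g (k (j+1) - 1) else 0 := by
          intro j _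
          by_cases hlt : k j < k (j+1)
          · by_cases hodd : k (j+1) % 2 = 1
            · rw [if_pos ⟨hlt, hodd⟩]
              simp only [hU, if_pos hlt, hg, nsq]
              rw [show 2 * (k (j+1) / 2) = k (j+1) - 1 by omega,
                show k (j+1) - 1 + 1 = k (j+1) by omega]
            · rw [if_neg (by tauto)]
              simp only [hU, if_pos hlt]
              rw [show 2 * (k (j+1) / 2) = k (j+1) by omega, sub_self]
              simp [ENNReal.zero_rpow_of_pos (by norm_num : (0:ℝ) < 2)]
          · rw [if_neg (by tauto)]
            simp only [hU, if_neg hlt]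
            exact ENNReal.zero_rpow_of_pos (by norm_num)
        have hW2 : ∀ j ∈ Finset.range J, W j ^ (2:ℝ) =
            if k j < k (j+1) ∧ k j % 2 = 1 then g (k j) else 0 := by
          intro j _
          by_cases hlt : k j < k (j+1)
          · by_cases hodd : k j % 2 = 1
            · rw [if_pos ⟨hlt, hodd⟩]
              simp only [hW, if_pos hlt, hg, nsq]
              rw [show 2 * ((k j + 1) / 2) = k j + 1 by omega]
            · rw [if_neg (by tauto)]
              simp only [hW, if_pos hlt]
              rw [show 2 * ((k j + 1) / 2) = k j by omega, sub_self]
              simp [ENNReal.zero_rpow_of_pos (by norm_num : (0:ℝ) < 2)]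
          · rw [if_neg (by tauto)]
            simp only [hW, if_neg hlt]
            exact ENNReal.zero_rpow_of_pos (by norm_num)
        rw [Finset.sum_congr rfl hU2, Finset.sum_congr rfl hW2,
          ← Finset.sum_filter, ← Finset.sum_filter]
        set A1 := (Finset.range J).filter (fun j => k j < k (j+1) ∧ k (j+1) % 2 = 1) with hA1
        set A2 := (Finset.range J).filter (fun j => k j < k (j+1) ∧ k j % 2 = 1) with hA2
        have hi1 : ∀ x ∈ A1, ∀ y ∈ A1, k (x+1) - 1 = k (y+1) - 1 → x = y := by
          intro x hx y hy hxy
          simp only [hA1, Finset.mem_filter, Finset.mem_range] at hx hy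
          rcases Nat.lt_trichotomy x y with h|h|h
          · exfalso; have := hmono (show x+1 ≤ y by omega); omega
          · exact h
          · exfalso; have := hmono (show y+1 ≤ x by omega); omega
        have hi2 : ∀ x ∈ A2, ∀ y ∈ A2, k x = k y → x = y := by
          intro x hx y hy hxy
          simp only [hA2, Finset.mem_filter, Finset.mem_range] at hx hy
          rcases Nat.lt_trichotomy x y with h|h|h
          · exfalso; have := hmono (show x+1 ≤ y by omega); omega
          · exact h
          · exfalso; have := hmono (show y+1 ≤ x by omega); omega
        rw [← Finset.sum_image hi1, ← Finset.sum_image hi2]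
        have hdisj : Disjoint (A1.image (fun j => k (j+1) - 1)) (A2.image (fun j => k j)) := by
          rw [Finset.disjoint_left]
          intro m hm1 hm2
          simp only [Finset.mem_image, hA1, hA2, Finset.mem_filter, Finset.mem_range] at hm1 hm2
          obtain ⟨x, ⟨_, _, hx2⟩, hxe⟩ := hm1
          obtain ⟨y, ⟨_, _, hy2⟩, hye⟩ := hm2
          omega
        rw [← Finset.sum_union hdisj]
        apply Finset.sum_le_sum_of_subset
        intro m hm
        rw [Finset.mem_union] at hm
        rw [Finset.mem_range]
        rcases hm with hm | hm
        · simp only [Finset.mem_image, hA1, Finset.mem_filter, Finset.mem_range] at hm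
          obtain ⟨x, ⟨_, _, hx2⟩, hxe⟩ := hm
          have := hbd (x+1); omega
        · simp only [Finset.mem_image, hA2, Finset.mem_filter, Finset.mem_range] at hm
          obtain ⟨y, ⟨_, hy1, hy2⟩, hye⟩ := hm
          have := hbd y; rw [hpow] at this; omega
      have hUWs : (∑ j ∈ Finset.range J, U j ^ (2:ℝ)) ^ ((1:ℝ)/2)
            + (∑ j ∈ Finset.range J, W j ^ (2:ℝ)) ^ ((1:ℝ)/2) ≤
          ENNReal.ofReal (Real.sqrt 2) * (∑ m ∈ Finset.range (2^(s+1)), g m) ^ ((1:ℝ)/2) :=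
        le_trans (aux_sqrt2 _ _)
          (mul_le_mul_right (ENNReal.rpow_le_rpow hUW (by norm_num)) _)
      have hVs : (∑ j ∈ Finset.range J, V j ^ (2:ℝ)) ^ ((1:ℝ)/2) ≤
          ENNReal.ofReal (Real.sqrt 2) *
            ∑ i ∈ Finset.range (s+1),
              (∑ j ∈ Finset.range (2 ^ (s - i)), nsq (a ((j+1) * 2^(i+1)) - a (j * 2^(i+1)))) ^ ((1:ℝ)/2) := by
        refine le_trans (ENNReal.rpow_le_rpow hVle (by norm_num)) (le_trans IH ?_)
        apply le_of_eq
        congr 1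
        refine Finset.sum_congr rfl ?_
        intro i _
        congr 1
        refine Finset.sum_congr rfl ?_
        intro j _
        rw [hbdiff]
      calc (∑ j ∈ Finset.range J, nsq (a (k (j+1)) - a (k j))) ^ ((1:ℝ)/2)
          ≤ ((∑ j ∈ Finset.range J, U j ^ (2:ℝ)) ^ ((1:ℝ)/2)
              + (∑ j ∈ Finset.range J, V j ^ (2:ℝ)) ^ ((1:ℝ)/2))
              + (∑ j ∈ Finset.range J, W j ^ (2:ℝ)) ^ ((1:ℝ)/2) := le_trans step1 step2
        _ = ((∑ j ∈ Finset.range J, U j ^ (2:ℝ)) ^ ((1:ℝ)/2)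
              + (∑ j ∈ Finset.range J, W j ^ (2:ℝ)) ^ ((1:ℝ)/2))
              + (∑ j ∈ Finset.range J, V j ^ (2:ℝ)) ^ ((1:ℝ)/2) := by ring
        _ ≤ ENNReal.ofReal (Real.sqrt 2) * (∑ m ∈ Finset.range (2^(s+1)), g m) ^ ((1:ℝ)/2)
              + ENNReal.ofReal (Real.sqrt 2) *
                ∑ i ∈ Finset.range (s+1),
                  (∑ j ∈ Finset.range (2 ^ (s - i)),
                    nsq (a ((j+1) * 2^(i+1)) - a (j * 2^(i+1)))) ^ ((1:ℝ)/2) := add_le_add hUWs hVs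
        _ = ENNReal.ofReal (Real.sqrt 2) *
              ∑ i ∈ Finset.range (s+1+1),
                (∑ j ∈ Finset.range (2 ^ (s+1 - i)),
                  nsq (a ((j+1) * 2^i) - a (j * 2^i))) ^ ((1:ℝ)/2) := by
            have hsplit : ∑ i ∈ Finset.range (s+1+1),
                (∑ j ∈ Finset.range (2 ^ (s+1 - i)),
                  nsq (a ((j+1) * 2^i) - a (j * 2^i))) ^ ((1:ℝ)/2)
                = (∑ i ∈ Finset.range (s+1),
                    (∑ j ∈ Finset.range (2 ^ (s - i)),
                      nsq (a ((j+1) * 2^(i+1)) - a (j * 2^(i+1)))) ^ ((1:ℝ)/2))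
                  + (∑ m ∈ Finset.range (2^(s+1)), g m) ^ ((1:ℝ)/2) := by
              conv_lhs => rw [Finset.sum_range_succ']
              congr 1
              · refine Finset.sum_congr rfl fun i _ => ?_
                have e : s + 1 - (i+1) = s - i := by omega
                rw [e]
              · congr 1
                refine Finset.sum_congr (by rw [Nat.sub_zero]) fun m _ => ?_
                simp [hg]
            rw [hsplit]
            ring

lemma aux_lr_le_l2 {ι : Type*} (s : Finset ι) (f : ι → ℝ≥0∞) {r : ℝ} (hr : 2 ≤ r) :
    (∑ i ∈ s, f i ^ r) ^ (1/r) ≤ (∑ i ∈ s, f i ^ (2:ℝ)) ^ ((1:ℝ)/2) := by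
  have h0 : (0:ℝ) < r := by linarith
  have h1 : ∀ i ∈ s, f i ^ r = (f i ^ (2:ℝ)) ^ (r/2) := fun i _ => by
    rw [← ENNReal.rpow_mul]
    congr 1
    ring
  rw [Finset.sum_congr rfl h1]
  have h2 : ∑ i ∈ s, (f i ^ (2:ℝ)) ^ (r/2) ≤ (∑ i ∈ s, f i ^ (2:ℝ)) ^ (r/2) :=
    aux_sum_rpow_le_rpow_sum s _ (by linarith)
  calc (∑ i ∈ s, (f i ^ (2:ℝ)) ^ (r/2)) ^ (1/r)
      ≤ ((∑ i ∈ s, f i ^ (2:ℝ)) ^ (r/2)) ^ (1/r) := ENNReal.rpow_le_rpow h2 (by positivity)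
    _ = (∑ i ∈ s, f i ^ (2:ℝ)) ^ ((1:ℝ)/2) := by
        rw [← ENNReal.rpow_mul]
        congr 1
        field_simp

end VarAux

/-- Lemma 1 (dyadic decomposition of the `r`-variation, `r ≥ 2`): the `r`-variation of
`(a_j : 0 ≤ j ≤ 2^s)` is bounded by `√2` times the sum over dyadic scales `i` of the square
functions of differences along arithmetic progressions of step `2^i`. -/
theorem variation_le_sqrt_two_dyadic (r : ℝ) (hr : 2 ≤ r) (s : ℕ) (a : ℕ → ℂ) :
    variationSeminorm r a (Set.Icc 0 (2 ^ s)) ≤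
      ENNReal.ofReal (Real.sqrt 2) *
        ∑ i ∈ Finset.range (s + 1),
          (∑ j ∈ Finset.range (2 ^ (s - i)),
            ENNReal.ofReal (‖a ((j + 1) * 2 ^ i) - a (j * 2 ^ i)‖ ^ 2)) ^ ((1 : ℝ) / 2) := by
  have h0 : (0:ℝ) < r := by linarith
  rw [variationSeminorm]
  refine iSup_le fun J => iSup_le fun k => iSup_le fun hk => iSup_le fun hmem => ?_
  set k' : ℕ → ℕ := fun n => k ⟨min n J, Nat.lt_succ_of_le (Nat.min_le_right n J)⟩ with hk'
  have hstep : ∀ j, k' j ≤ k' (j+1) := fun j =>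
    hk.monotone (by rw [Fin.mk_le_mk]; omega)
  have hbd : ∀ j, k' j ≤ 2^s := fun j => (Set.mem_Icc.mp (hmem _)).2
  have key := VarAux.key_lemma s a J k' hstep hbd
  have hconv : ∀ j : Fin J, a (k j.succ) - a (k j.castSucc) = a (k' (↑j+1)) - a (k' ↑j) := by
    intro j
    have hj := j.isLt
    have e1 : k j.succ = k' (↑j+1) := by
      simp only [hk']
      congr 1
      rw [Fin.ext_iff]
      simp only [Fin.val_succ]
      omega
    have e2 : k j.castSucc = k' ↑j := by
      simp only [hk']
      congr 1
      rw [Fin.ext_iff]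
      simp only [Fin.coe_castSucc]
      omega
    rw [e1, e2]
  calc (∑ j : Fin J, ENNReal.ofReal (‖a (k j.succ) - a (k j.castSucc)‖ ^ r)) ^ (1 / r)
      = (∑ j : Fin J, ENNReal.ofReal ‖a (k j.succ) - a (k j.castSucc)‖ ^ r) ^ (1 / r) := by
        congr 1
        refine Finset.sum_congr rfl fun j _ => ?_
        rw [ENNReal.ofReal_rpow_of_nonneg (norm_nonneg _) h0.le]
    _ ≤ (∑ j : Fin J, ENNReal.ofReal ‖a (k j.succ) - a (k j.castSucc)‖ ^ (2:ℝ)) ^ ((1:ℝ)/2) :=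
        VarAux.aux_lr_le_l2 _ _ hr
    _ = (∑ j ∈ Finset.range J, VarAux.nsq (a (k' (j+1)) - a (k' j))) ^ ((1:ℝ)/2) := by
        congr 1
        rw [← Fin.sum_univ_eq_sum_range (fun j => VarAux.nsq (a (k' (j+1)) - a (k' j))) J]
        refine Finset.sum_congr rfl fun j _ => ?_
        rw [VarAux.nsq, hconv j]
    _ ≤ ENNReal.ofReal (Real.sqrt 2) *
          ∑ i ∈ Finset.range (s + 1),
            (∑ j ∈ Finset.range (2 ^ (s - i)),
              ENNReal.ofReal (‖a ((j + 1) * 2 ^ i) - a (j * 2 ^ i)‖ ^ 2)) ^ ((1 : ℝ) / 2) := by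
        simp only [VarAux.nsq_eq]
        exact key
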